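/- Let r ∈ ℝ with r > 1, let q₀ = √(r² − 1), and let ζ ∈ ℂ with rζ ≠ 1. Then |ζ(ζ − r)/(rζ − 1)| ≤ 1 if and only if (|ζ| − 1)·(|ζ − r| − q₀) ≤ 0. -/

import Mathlib

open Complex

theorem stmt_7 (r : ℝ) (hr : 1 < r) (q₀ : ℝ) (hq₀ : q₀ = Real.sqrt (r ^ 2 - 1))
    (ζ : ℂ) (hζ : (r : ℂ) * ζ ≠ 1) :
    ‖ζ * (ζ - r) / ((r : ℂ) * ζ - 1)‖ ≤ 1 ↔
      (‖ζ‖ - 1) * (‖ζ - r‖ - q₀) ≤ 0 := by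
  have hq0sq : q₀ ^ 2 = r ^ 2 - 1 := by
    rw [hq₀]; exact Real.sq_sqrt (by nlinarith)
  have hq0pos : 0 < q₀ := by
    rw [hq₀]; exact Real.sqrt_pos.mpr (by nlinarith)
  set A := ‖ζ‖ with hA
  set B := ‖ζ - r‖ with hB
  set C := ‖(r : ℂ) * ζ - 1‖ with hC
  have hCpos : 0 < C := norm_pos_iff.mpr (sub_ne_zero.mpr hζ)
  have hA0 : 0 ≤ A := norm_nonneg _
  have hB0 : 0 ≤ B := norm_nonneg _
  have hA2 : A ^ 2 = ζ.re ^ 2 + ζ.im ^ 2 := by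
    rw [hA, Complex.sq_norm, Complex.normSq_apply]; ring
  have hB2 : B ^ 2 = (ζ.re - r) ^ 2 + ζ.im ^ 2 := by
    rw [hB, Complex.sq_norm, Complex.normSq_apply]; simp; ring
  have hC2 : C ^ 2 = (r * ζ.re - 1) ^ 2 + (r * ζ.im) ^ 2 := by
    rw [hC, Complex.sq_norm, Complex.normSq_apply]; simp; ring
  have hkey : C ^ 2 - (A * B) ^ 2 = -(A ^ 2 - 1) * (B ^ 2 - q₀ ^ 2) := by
    rw [mul_pow, hA2, hB2, hC2, hq0sq]; ring
  rw [norm_div, norm_mul, div_le_one hCpos]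
  constructor
  · intro h
    by_contra hcon
    push_neg at hcon
    have h1 : 0 < (A - 1) * (B - q₀) := hcon
    have heq : (A ^ 2 - 1) * (B ^ 2 - q₀ ^ 2)
        = (A - 1) * (B - q₀) * ((A + 1) * (B + q₀)) := by ring
    have hpos : 0 < (A + 1) * (B + q₀) := by positivity
    have h2 : 0 < (A ^ 2 - 1) * (B ^ 2 - q₀ ^ 2) := by
      rw [heq]; exact mul_pos h1 hpos
    nlinarith [mul_nonneg hA0 hB0]
  · intro h
    have heq : (A ^ 2 - 1) * (B ^ 2 - q₀ ^ 2)
        = (A - 1) * (B - q₀) * ((A + 1) * (B + q₀)) := by ring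
    have hpos : 0 < (A + 1) * (B + q₀) := by positivity
    have h2 : (A ^ 2 - 1) * (B ^ 2 - q₀ ^ 2) ≤ 0 := by
      rw [heq]; exact mul_nonpos_of_nonpos_of_nonneg h hpos.le
    nlinarith [mul_nonneg hA0 hB0]
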